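/- Let i < j < k ≤ n be distinct. If P ∈ PB_n is a product of the elements b_{ij}^{±1}, b_{ik}^{±1}, b_{jk}^{±1} and \widetilde{w}_{ijk}(\widetilde{φ}(P)) = 1 in F_{n+1}^3, then P equals, in PB_n, a product of elements of the form (b_{ij} b_{ik} b_{jk})^{±1} and (b_{jk} b_{ik} b_{ij})^{±1}. -/

import Mathlib

/-- Index type for the generators `a_{ijk}` of `G_n^3`: 3-element subsets of `Fin n`. -/
abbrev TripleIndex (n : ℕ) := {s : Finset (Fin n) // s.card = 3}

/-- Index type for the generators `b_{ij}` (with `i < j`) of the pure braid group. -/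
abbrev PBGen (n : ℕ) := {p : Fin n × Fin n // p.1 < p.2}

/-- Index type for the generators `σ_{ij}` (ordered pairs of distinct indices). -/
abbrev SGen (n : ℕ) := {p : Fin n × Fin n // p.1 ≠ p.2}

/-- Generators of the group `\widetilde{G}_n^3`. -/
abbrev TGen (n : ℕ) := TripleIndex n ⊕ SGen n

/-- `a_{ijk}` interpreted via `f`, equal to `1` when `i,j,k` are not pairwise distinct. -/
def atri {n : ℕ} {G : Type*} [Group G] (f : TripleIndex n → G) (i j k : Fin n) : G :=
  if h : ({i, j, k} : Finset (Fin n)).card = 3 then f ⟨{i, j, k}, h⟩ else 1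

/-- `σ_{ij}` interpreted via `f`, equal to `1` when `i = j`. -/
def sgen {n : ℕ} {G : Type*} [Group G] (f : SGen n → G) (i j : Fin n) : G :=
  if h : i ≠ j then f ⟨(i, j), h⟩ else 1

/-- `b_{ij}` interpreted via `f`, equal to `1` unless `i < j`. -/
def bgen {n : ℕ} {G : Type*} [Group G] (f : PBGen n → G) (i j : Fin n) : G :=
  if h : i < j then f ⟨(i, j), h⟩ else 1

/-- The letter `b_{ij}` in the free group on the pure braid generators. -/
def pbB {n : ℕ} (i j : Fin n) : FreeGroup (PBGen n) := bgen FreeGroup.of i j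

/-- The letter `a_{ijk}` in the free group on the generators of `G_n^3`. -/
def frA {n : ℕ} (i j k : Fin n) : FreeGroup (TripleIndex n) := atri FreeGroup.of i j k

/-- The letter `a_{ijk}` in the free group on the generators of `\widetilde{G}_n^3`. -/
def tA {n : ℕ} (i j k : Fin n) : FreeGroup (TGen n) :=
  atri (fun t => FreeGroup.of (Sum.inl t)) i j k

/-- The letter `σ_{ij}` in the free group on the generators of `\widetilde{G}_n^3`. -/
def tS {n : ℕ} (i j : Fin n) : FreeGroup (TGen n) :=
  sgen (fun p => FreeGroup.of (Sum.inr p)) i j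

/-- The defining relators of the pure braid group `PB_n`
(Cohen–Falk–Randell presentation), written as relators `LHS * RHS⁻¹`. -/
def PBRels (n : ℕ) : Set (FreeGroup (PBGen n)) :=
  { x | ∃ i j r s : Fin n, i < j ∧ r < s ∧
      (((s < i ∨ j < r) ∧
          x = pbB r s * pbB i j * (pbB r s)⁻¹ * (pbB i j)⁻¹) ∨
        ((j = r) ∧
          x = pbB r s * pbB i j * (pbB r s)⁻¹ * ((pbB i s)⁻¹ * pbB i j * pbB i s)⁻¹) ∨
        ((i < r ∧ j = s) ∧
          x = pbB r s * pbB i j * (pbB r s)⁻¹ *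
            ((pbB i j)⁻¹ * (pbB i r)⁻¹ * pbB i j * pbB i r * pbB i j)⁻¹) ∨
        ((i < r ∧ r < j ∧ j < s) ∧
          x = pbB r s * pbB i j * (pbB r s)⁻¹ *
            ((pbB i s)⁻¹ * (pbB i r)⁻¹ * pbB i s * pbB i r * pbB i j *
              (pbB i r)⁻¹ * (pbB i s)⁻¹ * pbB i r * pbB i s)⁻¹)) }

/-- The pure braid group on `n` strands, via its standard presentation. -/
abbrev PBn (n : ℕ) := PresentedGroup (PBRels n)

/-- The defining relators of `G_n^3`. -/
def Gn3Rels (n : ℕ) : Set (FreeGroup (TripleIndex n)) :=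
  { x | (∃ t : TripleIndex n, x = FreeGroup.of t * FreeGroup.of t) ∨
      (∃ t u : TripleIndex n, (t.1 ∩ u.1).card ≤ 1 ∧
        x = FreeGroup.of t * FreeGroup.of u * (FreeGroup.of u * FreeGroup.of t)⁻¹) ∨
      (∃ i j k l : Fin n, [i, j, k, l].Nodup ∧
        x = frA i j k * frA i j l * frA i k l * frA j k l *
          (frA j k l * frA i k l * frA i j l * frA i j k)⁻¹) }

/-- The group `G_n^3`. -/
abbrev Gn3 (n : ℕ) := PresentedGroup (Gn3Rels n)

/-- The defining relators of `\widetilde{G}_n^3`, relations (a)–(i). -/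
def TGn3Rels (n : ℕ) : Set (FreeGroup (TGen n)) :=
  { x | (∃ t : TripleIndex n,
          x = FreeGroup.of (Sum.inl t) * FreeGroup.of (Sum.inl t)) ∨
      (∃ t u : TripleIndex n, (t.1 ∩ u.1).card ≤ 1 ∧
          x = FreeGroup.of (Sum.inl t) * FreeGroup.of (Sum.inl u) *
            (FreeGroup.of (Sum.inl u) * FreeGroup.of (Sum.inl t))⁻¹) ∨
      (∃ i j k l : Fin n, [i, j, k, l].Nodup ∧
          x = tA i j k * tA i j l * tA i k l * tA j k l *
            (tA j k l * tA i k l * tA i j l * tA i j k)⁻¹) ∨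
      (∃ i j k l : Fin n, [i, j, k, l].Nodup ∧
          x = tS i j * tS k l * (tS k l * tS i j)⁻¹) ∨
      (∃ (i j : Fin n) (u : TripleIndex n), i ≠ j ∧
          (({i, j} : Finset (Fin n)) ∩ u.1).card ≤ 1 ∧
          x = tS i j * FreeGroup.of (Sum.inl u) *
            (FreeGroup.of (Sum.inl u) * tS i j)⁻¹) ∨
      (∃ i j k : Fin n, [i, j, k].Nodup ∧
          (x = tA i j k * tS i j * tS i k * tS j k *
              (tS j k * tS i k * tS i j * tA i j k)⁻¹ ∨
            x = tS i j * tA i j k * tS i k * tS j k *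
              (tS j k * tS i k * tA i j k * tS i j)⁻¹ ∨
            x = tS i j * tS i k * tA i j k * tS j k *
              (tS j k * tA i j k * tS i k * tS i j)⁻¹ ∨
            x = tS i j * tS i k * tS j k * tA i j k *
              (tA i j k * tS j k * tS i k * tS i j)⁻¹)) }

/-- The group `\widetilde{G}_n^3`. -/
abbrev TGn3 (n : ℕ) := PresentedGroup (TGn3Rels n)

/-- Ordered product of `f l` over all `l > k`, in increasing order of `l`. -/
def listUp {n : ℕ} {G : Type*} [Group G] (f : Fin n → G) (k : Fin n) : G :=
  (((List.finRange n).filter fun l => decide (k < l)).map f).prod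

/-- Ordered product of `f l` over all `l < k`, in increasing order of `l`. -/
def listLow {n : ℕ} {G : Type*} [Group G] (f : Fin n → G) (k : Fin n) : G :=
  (((List.finRange n).filter fun l => decide (l < k)).map f).prod

/-- The word `c_{i,k} = (∏_{l=k+1}^{n} a_{ikl}) (∏_{l=1}^{k-1} a_{ikl})`
(degenerate letters give `1`, so the products effectively omit `l ∈ {i,k}`). -/
def cPhi {n : ℕ} {G : Type*} [Group G] (f : TripleIndex n → G) (i k : Fin n) : G :=
  listUp (fun l => atri f i k l) k * listLow (fun l => atri f i k l) k

/-- The word `φ(b_{ij}) = c_{i,i+1}⁻¹ ⋯ c_{i,j-1}⁻¹ (c_{i,j})² c_{i,j-1} ⋯ c_{i,i+1}`. -/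
def phiWord {n : ℕ} {G : Type*} [Group G] (f : TripleIndex n → G) (i j : Fin n) : G :=
  (((List.finRange n).filter fun m => decide (i < m ∧ m < j)).map
      fun m => (cPhi f i m)⁻¹).prod *
    (cPhi f i j) ^ 2 *
    ((((List.finRange n).filter fun m => decide (i < m ∧ m < j)).map
      fun m => (cPhi f i m)⁻¹).prod)⁻¹

/-- `φ` on the generators of `PB_n`, with values in `G_n^3`. -/
def phiGen {n : ℕ} : PBGen n → Gn3 n :=
  fun p => phiWord PresentedGroup.of p.1.1 p.1.2

/-- The word `(∏_{k=m+1}^{n} a_{imk}) · σ · (∏_{k=1}^{m-1} a_{imk})` for a middle letter `σ`. -/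
def cMid {n : ℕ} {G : Type*} [Group G] (fa : TripleIndex n → G) (σmid : G) (i m : Fin n) : G :=
  listUp (fun k => atri fa i m k) m * σmid * listLow (fun k => atri fa i m k) m

/-- The word `\widetilde{φ}(b_{ij}) = c_{i,i+1}⁻¹ ⋯ c_{i,j-1}⁻¹ \bar c_{i,j} \bar c_{j,i}
c_{i,j-1} ⋯ c_{i,i+1}`, where `c_{i,m}`, `\bar c_{i,m}`, `\bar c_{j,i}` are as in the paper. -/
def tphiWord {n : ℕ} {G : Type*} [Group G] (fa : TripleIndex n → G) (fs : SGen n → G)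
    (i j : Fin n) : G :=
  (((List.finRange n).filter fun m => decide (i < m ∧ m < j)).map
      fun m => (cMid fa (sgen fs i m)⁻¹ i m)⁻¹).prod *
    cMid fa (sgen fs i j) i j * cMid fa (sgen fs j i) i j *
    ((((List.finRange n).filter fun m => decide (i < m ∧ m < j)).map
      fun m => (cMid fa (sgen fs i m)⁻¹ i m)⁻¹).prod)⁻¹

/-- `\widetilde{φ}` on the generators of `PB_n`, with values in `\widetilde{G}_n^3`. -/
def tphiGen {n : ℕ} : PBGen n → TGn3 n :=
  fun p => tphiWord (fun t => PresentedGroup.of (Sum.inl t))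
    (fun q => PresentedGroup.of (Sum.inr q)) p.1.1 p.1.2
/-- Index set for the free product `F_n^3`: functions from `{1,…,n} ∖ {i,j,k}` to `ℤ/2 × ℤ/2`. -/
def Fn3Idx (n : ℕ) (i j k : Fin n) : Type :=
  {l : Fin n // l ≠ i ∧ l ≠ j ∧ l ≠ k} → ZMod 2 × ZMod 2

/-- Relators of `F_n^3`: every generator is an involution. -/
def Fn3Rels (n : ℕ) (i j k : Fin n) : Set (FreeGroup (Fn3Idx n i j k)) :=
  { x | ∃ f : Fn3Idx n i j k, x = FreeGroup.of f * FreeGroup.of f }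

/-- The group `F_n^3`: the free product of copies of `ℤ/2` indexed by `Fn3Idx n i j k`. -/
abbrev Fn3 (n : ℕ) (i j k : Fin n) := PresentedGroup (Fn3Rels n i j k)

/-- The number of occurrences of the letter `a_{xyz}` in a word in the generators of `G_n^3`. -/
def cntA {n : ℕ} (L : List (TripleIndex n)) (x y z : Fin n) : ℕ :=
  L.countP fun t => decide (t.1 = ({x, y, z} : Finset (Fin n)))

/-- The index of an occurrence of `a_{ijk}` whose preceding prefix is `pre`:
`l ↦ (N_{jkl} + N_{ijl}, N_{ikl} + N_{ijl})` in `ℤ/2 × ℤ/2`. -/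
def idxOf {n : ℕ} (i j k : Fin n) (pre : List (TripleIndex n)) : Fn3Idx n i j k :=
  fun l => (((cntA pre j k l.1 + cntA pre i j l.1 : ℕ) : ZMod 2),
            ((cntA pre i k l.1 + cntA pre i j l.1 : ℕ) : ZMod 2))

/-- Auxiliary recursion computing `w_{ijk}` of a word: `pre` is the prefix read so far. -/
def wRec {n : ℕ} (i j k : Fin n) :
    List (TripleIndex n) → List (TripleIndex n) → Fn3 n i j k
  | _, [] => 1
  | pre, t :: rest =>
      (if t.1 = ({i, j, k} : Finset (Fin n)) then
          PresentedGroup.of (idxOf i j k pre) else 1) *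
        wRec i j k (pre ++ [t]) rest

/-- The index-counting map `w_{ijk}` on words in the generators of `G_n^3`. -/
def wWord {n : ℕ} (i j k : Fin n) (L : List (TripleIndex n)) : Fn3 n i j k :=
  wRec i j k [] L

/-- The element of `G_n^3` represented by a word in the generators. -/
def gn3Word {n : ℕ} (L : List (TripleIndex n)) : Gn3 n :=
  (L.map PresentedGroup.of).prod

/-- The inclusion of triples of `{1,…,n}` into triples of `{1,…,n+1}`. -/
def castTriple {n : ℕ} (t : TripleIndex n) : TripleIndex (n + 1) :=
  ⟨t.1.map ⟨Fin.castSucc, Fin.castSucc_injective n⟩, by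
    rw [Finset.card_map]; exact t.2⟩

/-- The triple `{i, j, n+1}` associated with `σ_{ij}`. -/
def sigTriple {n : ℕ} (p : SGen n) : TripleIndex (n + 1) :=
  ⟨{p.1.1.castSucc, p.1.2.castSucc, Fin.last n},
    Finset.card_eq_three.mpr ⟨_, _, _,
      fun h => p.2 (Fin.castSucc_injective n h),
      (Fin.castSucc_lt_last _).ne, (Fin.castSucc_lt_last _).ne, rfl⟩⟩

/-- `π` on the generators of `\widetilde{G}_n^3`: `a_{ijk} ↦ a_{ijk}`, `σ_{ij} ↦ a_{ij(n+1)}`. -/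
def piGen {n : ℕ} : TGen n → Gn3 (n + 1)
  | Sum.inl t => PresentedGroup.of (castTriple t)
  | Sum.inr p => PresentedGroup.of (sigTriple p)



namespace Stmt10

abbrev F2 := FreeGroup (Fin 2)

def xg : F2 := FreeGroup.of 0
def yg : F2 := FreeGroup.of 1

def finv : F2 →* F2 := FreeGroup.lift fun b => (FreeGroup.of b)⁻¹

lemma finv_of (b : Fin 2) : finv (FreeGroup.of b) = (FreeGroup.of b)⁻¹ :=
  FreeGroup.lift_apply_of

lemma finv_finv : finv.comp finv = MonoidHom.id F2 := by
  apply FreeGroup.ext_hom; intro a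
  simp [finv_of, finv]

lemma finv_finv' (g : F2) : finv (finv g) = g := by
  simpa using DFunLike.congr_fun finv_finv g

def invAut : MulAut F2 := MonoidHom.toMulEquiv finv finv finv_finv finv_finv

lemma invAut_apply (g : F2) : invAut g = finv g := rfl

lemma invAut_sq : invAut * invAut = 1 := by
  ext g
  show invAut (invAut g) = g
  simp [invAut_apply, finv_finv']

def φH : ℤˣ →* MulAut F2 where
  toFun u := if u = 1 then 1 else invAut
  map_one' := by simp
  map_mul' a b := by
    rcases Int.units_eq_one_or a with ha | ha <;>
      rcases Int.units_eq_one_or b with hb | hb <;> subst ha hb <;> simp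
    · exact invAut_sq.symm

abbrev Hgp := SemidirectProduct F2 ℤˣ φH

lemma φH_neg_one (g : F2) : φH (-1) g = finv g := by
  have h : (-1 : ℤˣ) ≠ 1 := by decide
  show (if (-1 : ℤˣ) = 1 then (1 : MulAut F2) else invAut) g = finv g
  rw [if_neg h, invAut_apply]

def αH : Hgp := ⟨1, -1⟩
def βH : Hgp := ⟨xg, -1⟩
def γH : Hgp := ⟨yg, -1⟩

lemma finv_x : finv xg = xg⁻¹ := finv_of 0
lemma finv_y : finv yg = yg⁻¹ := finv_of 1

lemma hαα : αH * αH = 1 := by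
  ext
  · show (1 : F2) * φH (-1) 1 = 1; simp
  · show ((-1 : ℤˣ) * -1 : ℤ) = _; norm_num
lemma hββ : βH * βH = 1 := by
  ext
  · show xg * φH (-1) xg = 1; rw [φH_neg_one, finv_x]; simp
  · show ((-1 : ℤˣ) * -1 : ℤ) = _; norm_num
lemma hγγ : γH * γH = 1 := by
  ext
  · show yg * φH (-1) yg = 1; rw [φH_neg_one, finv_y]; simp
  · show ((-1 : ℤˣ) * -1 : ℤ) = _; norm_num

lemma hαβ : αH * βH = SemidirectProduct.inl xg⁻¹ := by
  ext
  · show (1 : F2) * φH (-1) xg = xg⁻¹; rw [φH_neg_one, finv_x]; simp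
  · show ((-1 : ℤˣ) * -1 : ℤ) = _; norm_num
lemma hβγ : βH * γH = SemidirectProduct.inl (xg * yg⁻¹) := by
  ext
  · show xg * φH (-1) yg = xg * yg⁻¹; rw [φH_neg_one, finv_y]
  · show ((-1 : ℤˣ) * -1 : ℤ) = _; norm_num
lemma hγα : γH * αH = SemidirectProduct.inl yg := by
  ext
  · show yg * φH (-1) 1 = yg; simp
  · show ((-1 : ℤˣ) * -1 : ℤ) = _; norm_num

/-- Nielsen endomorphism `e` and its left inverse `d`. -/
def eN : F2 →* F2 := FreeGroup.lift ![xg⁻¹, xg * yg⁻¹]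
def dN : F2 →* F2 := FreeGroup.lift ![xg⁻¹, yg⁻¹ * xg⁻¹]

lemma dN_eN : dN.comp eN = MonoidHom.id F2 := by
  apply FreeGroup.ext_hom; intro a
  fin_cases a <;>
    simp [eN, dN, xg, yg]

lemma eN_injective : Function.Injective eN := by
  intro a b h
  have e1 : ∀ g : F2, dN (eN g) = g := fun g => by
    simpa using DFunLike.congr_fun dN_eN g
  rw [← e1 a, ← e1 b, h]

def embH : F2 →* Hgp := (SemidirectProduct.inl).comp eN

lemma embH_injective : Function.Injective embH :=
  SemidirectProduct.inl_injective.comp eN_injective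

/-- `ρ : F₃ → F₂`. -/
def ρ3 : FreeGroup (Fin 3) →* F2 :=
  FreeGroup.lift ![FreeGroup.of 0, FreeGroup.of 1, (FreeGroup.of 1)⁻¹ * (FreeGroup.of 0)⁻¹]

lemma embH_ρ3_0 : embH (ρ3 (FreeGroup.of 0)) = αH * βH := by
  rw [hαβ]; simp [ρ3, embH, eN, xg, yg]
lemma embH_ρ3_1 : embH (ρ3 (FreeGroup.of 1)) = βH * γH := by
  rw [hβγ]; simp [ρ3, embH, eN, xg, yg]
lemma embH_ρ3_2 : embH (ρ3 (FreeGroup.of 2)) = γH * αH := by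
  rw [hγα]; simp [ρ3, embH, eN, dN, xg, yg]

end Stmt10

namespace Stmt10
section PB
variable {n : ℕ} (i j k : Fin n) (hij : i < j) (hjk : j < k)

lemma pbB_eq {a b : Fin n} (h : a < b) : pbB a b = FreeGroup.of (⟨(a, b), h⟩ : PBGen n) := by
  rw [pbB, bgen, dif_pos h]

lemma mk_rel {r : FreeGroup (PBGen n)} (hr : r ∈ PBRels n) :
    PresentedGroup.mk (PBRels n) r = 1 :=
  (QuotientGroup.eq_one_iff _).mpr (Subgroup.subset_normalClosure hr)

variable (hik : i < k)

def Xel {n : ℕ} (a b : Fin n) (h : a < b) : PBn n := PresentedGroup.of ⟨(a, b), h⟩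

lemma rel1 : (Xel j k hjk) * (Xel i j hij) = (Xel i k hik)⁻¹ * (Xel i j hij) * (Xel i k hik) * (Xel j k hjk) := by
  have hr : (pbB j k * pbB i j * (pbB j k)⁻¹ * ((pbB i k)⁻¹ * pbB i j * pbB i k)⁻¹ :
      FreeGroup (PBGen n)) ∈ PBRels n :=
    ⟨i, j, j, k, hij, hjk, Or.inr (Or.inl ⟨rfl, rfl⟩)⟩
  have h1 := mk_rel hr
  rw [pbB_eq hij, pbB_eq hjk, pbB_eq hik] at h1
  simp only [map_mul, map_inv] at h1
  rw [mul_inv_eq_one] at h1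
  have h1' : (Xel j k hjk) * (Xel i j hij) * (Xel j k hjk)⁻¹ = (Xel i k hik)⁻¹ * (Xel i j hij) * (Xel i k hik) := h1
  rw [← h1']; group

lemma rel2 : (Xel j k hjk) * (Xel i k hik) = (Xel i k hik)⁻¹ * (Xel i j hij)⁻¹ * (Xel i k hik) * (Xel i j hij) * (Xel i k hik) * (Xel j k hjk) := by
  have hr : (pbB j k * pbB i k * (pbB j k)⁻¹ *
      ((pbB i k)⁻¹ * (pbB i j)⁻¹ * pbB i k * pbB i j * pbB i k)⁻¹ :
      FreeGroup (PBGen n)) ∈ PBRels n :=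
    ⟨i, k, j, k, hik, hjk, Or.inr (Or.inr (Or.inl ⟨⟨hij, rfl⟩, rfl⟩))⟩
  have h1 := mk_rel hr
  rw [pbB_eq hij, pbB_eq hjk, pbB_eq hik] at h1
  simp only [map_mul, map_inv] at h1
  rw [mul_inv_eq_one] at h1
  have h1' : (Xel j k hjk) * (Xel i k hik) * (Xel j k hjk)⁻¹ = (Xel i k hik)⁻¹ * (Xel i j hij)⁻¹ * (Xel i k hik) * (Xel i j hij) * (Xel i k hik) := h1
  rw [← h1']; group

lemma comm_x : Commute (Xel i j hij) ((Xel i j hij) * (Xel i k hik) * (Xel j k hjk)) := by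
  unfold Commute SemiconjBy
  calc (Xel i j hij) * ((Xel i j hij) * (Xel i k hik) * (Xel j k hjk)) = (Xel i j hij) * (Xel i j hij) * (Xel i k hik) * (Xel j k hjk) := by group
    _ = (Xel i j hij) * (Xel i k hik) * (Xel j k hjk) * (Xel i j hij) := by
        have : (Xel i j hij) * (Xel i k hik) * (Xel j k hjk) * (Xel i j hij) = (Xel i j hij) * (Xel i k hik) * ((Xel j k hjk) * (Xel i j hij)) := by group
        rw [this, rel1 i j k hij hjk hik]; group

lemma comm_y : Commute (Xel i k hik) ((Xel i j hij) * (Xel i k hik) * (Xel j k hjk)) := by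
  unfold Commute SemiconjBy
  calc (Xel i k hik) * ((Xel i j hij) * (Xel i k hik) * (Xel j k hjk)) = (Xel i k hik) * (Xel i j hij) * (Xel i k hik) * (Xel j k hjk) := by group
    _ = (Xel i j hij) * (Xel i k hik) * (Xel j k hjk) * (Xel i k hik) := by
        have : (Xel i j hij) * (Xel i k hik) * (Xel j k hjk) * (Xel i k hik) = (Xel i j hij) * (Xel i k hik) * ((Xel j k hjk) * (Xel i k hik)) := by group
        rw [this, rel2 i j k hij hjk hik]; group

lemma comm_z : Commute (Xel j k hjk) ((Xel i j hij) * (Xel i k hik) * (Xel j k hjk)) := by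
  unfold Commute SemiconjBy
  have h : (Xel j k hjk) * ((Xel i j hij) * (Xel i k hik)) = (Xel i j hij) * (Xel i k hik) * (Xel j k hjk) := by
    have e1 : (Xel j k hjk) * ((Xel i j hij) * (Xel i k hik)) = ((Xel j k hjk) * (Xel i j hij)) * (Xel i k hik) := by group
    rw [e1, rel1 i j k hij hjk hik]
    have e2 : (Xel i k hik)⁻¹ * (Xel i j hij) * (Xel i k hik) * (Xel j k hjk) * (Xel i k hik) = (Xel i k hik)⁻¹ * (Xel i j hij) * (Xel i k hik) * ((Xel j k hjk) * (Xel i k hik)) := by group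
    rw [e2, rel2 i j k hij hjk hik]; group
  calc (Xel j k hjk) * ((Xel i j hij) * (Xel i k hik) * (Xel j k hjk)) = (Xel j k hjk) * ((Xel i j hij) * (Xel i k hik)) * (Xel j k hjk) := by group
    _ = (Xel i j hij) * (Xel i k hik) * (Xel j k hjk) * (Xel j k hjk) := by rw [h]

end PB
end Stmt10

namespace Stmt10
section Words
variable {n : ℕ}

lemma gn3_rel {r : FreeGroup (TripleIndex n)} (hr : r ∈ Gn3Rels n) :
    PresentedGroup.mk (Gn3Rels n) r = 1 :=
  (QuotientGroup.eq_one_iff _).mpr (Subgroup.subset_normalClosure hr)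

lemma gn3_invol (t : TripleIndex n) :
    (PresentedGroup.of t : Gn3 n) * PresentedGroup.of t = 1 := by
  have := gn3_rel (Or.inl ⟨t, rfl⟩)
  rw [map_mul] at this; exact this

lemma gn3_inv (t : TripleIndex n) :
    (PresentedGroup.of t : Gn3 n)⁻¹ = PresentedGroup.of t :=
  inv_eq_of_mul_eq_one_right (gn3_invol t)

lemma gn3Word_append (L1 L2 : List (TripleIndex n)) :
    gn3Word (L1 ++ L2) = gn3Word L1 * gn3Word L2 := by
  unfold gn3Word; rw [List.map_append, List.prod_append]

lemma gn3Word_singleton (t : TripleIndex n) : gn3Word [t] = PresentedGroup.of t := by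
  unfold gn3Word; simp

lemma gn3Word_reverse (L : List (TripleIndex n)) :
    gn3Word L.reverse = (gn3Word L)⁻¹ := by
  induction L with
  | nil => simp [gn3Word]
  | cons t L ih =>
    have h1 : (t :: L).reverse = L.reverse ++ [t] := by simp
    have h2 : (t :: L) = [t] ++ L := rfl
    rw [h1, gn3Word_append, ih, h2, gn3Word_append, mul_inv_rev, gn3Word_singleton, gn3_inv]

lemma gn3Word_flatMap {β : Type*} (f : β → List (TripleIndex n)) (L : List β) :
    gn3Word (L.flatMap f) = (L.map fun m => gn3Word (f m)).prod := by
  induction L with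
  | nil => rfl
  | cons b L ih => rw [List.flatMap_cons, gn3Word_append, List.map_cons, List.prod_cons, ih]

/-- optional triple -/
def tri3 (a b c : Fin (n + 1)) : Option (TripleIndex (n + 1)) :=
  if h : ({a, b, c} : Finset (Fin (n + 1))).card = 3 then some ⟨_, h⟩ else none

lemma tri3_mem {a b c : Fin (n + 1)} {t : TripleIndex (n + 1)} (h : tri3 a b c = some t) :
    t.1 = {a, b, c} := by
  unfold tri3 at h
  split_ifs at h with h3
  · cases h; rfl

lemma castSucc_triple_map (a b l : Fin n) :
    ({a.castSucc, b.castSucc, l.castSucc} : Finset (Fin (n + 1))) =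
      ({a, b, l} : Finset (Fin n)).map ⟨Fin.castSucc, Fin.castSucc_injective n⟩ := by
  simp [Finset.map_insert, Finset.map_singleton]

lemma atri_cast_eq (a b l : Fin n) :
    atri (fun t => (PresentedGroup.of (castTriple t) : Gn3 (n + 1))) a b l =
      (tri3 a.castSucc b.castSucc l.castSucc).elim 1 PresentedGroup.of := by
  unfold atri tri3
  have hc : ({a.castSucc, b.castSucc, l.castSucc} : Finset (Fin (n + 1))).card =
      ({a, b, l} : Finset (Fin n)).card := by
    rw [castSucc_triple_map, Finset.card_map]
  split_ifs with h1 h2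
  · show PresentedGroup.of _ = PresentedGroup.of _
    congr 1
    apply Subtype.ext
    show (({a, b, l} : Finset (Fin n)).map _) = _
    exact (castSucc_triple_map a b l).symm
  · exact absurd (hc.trans h1) h2
  · exact absurd (hc.symm.trans ‹_›) h1
  · rfl

def upL (a b : Fin n) : List (TripleIndex (n + 1)) :=
  ((List.finRange n).filter fun l => decide (b < l)).filterMap fun l =>
    tri3 a.castSucc b.castSucc l.castSucc

def lowL (a b : Fin n) : List (TripleIndex (n + 1)) :=
  ((List.finRange n).filter fun l => decide (l < b)).filterMap fun l =>
    tri3 a.castSucc b.castSucc l.castSucc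

def sigL (a b : Fin n) : List (TripleIndex (n + 1)) :=
  if h : a ≠ b then [sigTriple ⟨(a, b), h⟩] else []

def cU (a b : Fin n) : List (TripleIndex (n + 1)) := upL a b ++ sigL a b ++ lowL a b
def cV (a b : Fin n) : List (TripleIndex (n + 1)) := upL a b ++ sigL b a ++ lowL a b

def mids (a b : Fin n) : List (Fin n) :=
  (List.finRange n).filter fun m => decide (a < m ∧ m < b)

def preL (a b : Fin n) : List (TripleIndex (n + 1)) :=
  (mids a b).flatMap fun m => (cU a m).reverse

def bigL (a b : Fin n) : List (TripleIndex (n + 1)) :=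
  preL a b ++ cU a b ++ cV a b ++ (preL a b).reverse

lemma gn3Word_filterMap (a b : Fin n) (L : List (Fin n)) :
    gn3Word (L.filterMap fun l => tri3 a.castSucc b.castSucc l.castSucc) =
      (L.map fun l =>
        atri (fun t => (PresentedGroup.of (castTriple t) : Gn3 (n + 1))) a b l).prod := by
  induction L with
  | nil => rfl
  | cons l L ih =>
    rw [List.map_cons, List.prod_cons, ← ih, atri_cast_eq]
    cases htri : tri3 a.castSucc b.castSucc l.castSucc with
    | none => rw [List.filterMap_cons, htri]; simp
    | some t =>
        rw [List.filterMap_cons, htri]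
        show gn3Word ([t] ++ _) = _
        rw [gn3Word_append, gn3Word_singleton]
        rfl

lemma gn3Word_upL (a b : Fin n) :
    gn3Word (upL a b) =
      listUp (fun l => atri (fun t => (PresentedGroup.of (castTriple t) : Gn3 (n + 1))) a b l)
        b := gn3Word_filterMap a b _

lemma gn3Word_lowL (a b : Fin n) :
    gn3Word (lowL a b) =
      listLow (fun l => atri (fun t => (PresentedGroup.of (castTriple t) : Gn3 (n + 1))) a b l)
        b := gn3Word_filterMap a b _

lemma gn3Word_sigL (a b : Fin n) :
    gn3Word (sigL a b) = sgen (fun p => (PresentedGroup.of (sigTriple p) : Gn3 (n + 1))) a b := by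
  unfold sigL sgen
  split_ifs
  · exact gn3Word_singleton _
  · rfl

lemma sgen_sig_inv (a b : Fin n) :
    (sgen (fun p => (PresentedGroup.of (sigTriple p) : Gn3 (n + 1))) a b)⁻¹ =
      sgen (fun p => (PresentedGroup.of (sigTriple p) : Gn3 (n + 1))) a b := by
  unfold sgen; split_ifs
  · exact gn3_inv _
  · exact inv_one

lemma gn3Word_cU (a b : Fin n) :
    gn3Word (cU a b) =
      cMid (fun t => (PresentedGroup.of (castTriple t) : Gn3 (n + 1)))
        (sgen (fun p => (PresentedGroup.of (sigTriple p) : Gn3 (n + 1))) a b) a b := by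
  unfold cU cMid
  rw [gn3Word_append, gn3Word_append, gn3Word_upL, gn3Word_sigL, gn3Word_lowL]

lemma gn3Word_cV (a b : Fin n) :
    gn3Word (cV a b) =
      cMid (fun t => (PresentedGroup.of (castTriple t) : Gn3 (n + 1)))
        (sgen (fun p => (PresentedGroup.of (sigTriple p) : Gn3 (n + 1))) b a) a b := by
  unfold cV cMid
  rw [gn3Word_append, gn3Word_append, gn3Word_upL, gn3Word_sigL, gn3Word_lowL]

lemma tphi_eq (a b : Fin n) :
    tphiWord (fun t => (PresentedGroup.of (castTriple t) : Gn3 (n + 1)))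
        (fun p => PresentedGroup.of (sigTriple p)) a b = gn3Word (bigL a b) := by
  unfold tphiWord bigL
  rw [gn3Word_append, gn3Word_append, gn3Word_append, gn3Word_reverse]
  have hpre : gn3Word (preL a b) =
      (((List.finRange n).filter fun m => decide (a < m ∧ m < b)).map fun m =>
        (cMid (fun t => (PresentedGroup.of (castTriple t) : Gn3 (n + 1)))
          (sgen (fun p => PresentedGroup.of (sigTriple p)) a m)⁻¹ a m)⁻¹).prod := by
    unfold preL mids
    rw [gn3Word_flatMap]
    congr 1
    apply List.map_congr_left
    intro m _
    rw [gn3Word_reverse, gn3Word_cU, sgen_sig_inv]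
  rw [hpre, gn3Word_cU, gn3Word_cV]

section MapHom
variable {G G' : Type*} [Group G] [Group G'] (F : G →* G')

lemma map_atri (f : TripleIndex n → G) (a b c : Fin n) :
    F (atri f a b c) = atri (fun t => F (f t)) a b c := by
  unfold atri; split_ifs
  · rfl
  · exact map_one F

lemma map_sgen (f : SGen n → G) (a b : Fin n) :
    F (sgen f a b) = sgen (fun p => F (f p)) a b := by
  unfold sgen; split_ifs
  · rfl
  · exact map_one F

lemma map_listUp (f : Fin n → G) (b : Fin n) :
    F (listUp f b) = listUp (fun l => F (f l)) b := by
  unfold listUp; rw [map_list_prod, List.map_map]; rfl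

lemma map_listLow (f : Fin n → G) (b : Fin n) :
    F (listLow f b) = listLow (fun l => F (f l)) b := by
  unfold listLow; rw [map_list_prod, List.map_map]; rfl

lemma map_cMid (fa : TripleIndex n → G) (σ : G) (a b : Fin n) :
    F (cMid fa σ a b) = cMid (fun t => F (fa t)) (F σ) a b := by
  unfold cMid
  rw [map_mul, map_mul, map_listUp, map_listLow]
  have ha : (fun l => F (atri fa a b l)) = fun l => atri (fun t => F (fa t)) a b l :=
    funext fun l => map_atri F fa a b l
  rw [ha]

lemma map_tphiWord (fa : TripleIndex n → G) (fs : SGen n → G) (a b : Fin n) :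
    F (tphiWord fa fs a b) =
      tphiWord (fun t => F (fa t)) (fun p => F (fs p)) a b := by
  unfold tphiWord
  rw [map_mul, map_mul, map_mul, map_inv, map_list_prod, List.map_map, map_cMid,
    map_cMid, map_sgen, map_sgen]
  have hmap : (⇑F ∘ fun m => (cMid fa (sgen fs a m)⁻¹ a m)⁻¹) =
      fun m => (cMid (fun t => F (fa t)) (sgen (fun p => F (fs p)) a m)⁻¹ a m)⁻¹ :=
    funext fun m => by
      show F _ = _
      rw [map_inv, map_cMid, map_inv, map_sgen]
  rw [hmap]

end MapHom
end Words
end Stmt10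

namespace Stmt10
section Count

def Fval (v : ZMod 2 × ZMod 2) : Hgp :=
  if v = (0, 0) then αH else if v = (1, 1) then βH else if v = (1, 0) then γH else 1

lemma Fval_invol (v : ZMod 2 × ZMod 2) : Fval v * Fval v = 1 := by
  have h2 : ∀ c : ZMod 2, c = 0 ∨ c = 1 := by decide
  obtain ⟨a, b⟩ := v
  rcases h2 a with rfl | rfl <;> rcases h2 b with rfl | rfl <;>
    simp [Fval, hαα, hββ, hγγ]

variable {n : ℕ} (i j k : Fin n)

def lastIdx : {l : Fin (n + 1) // l ≠ i.castSucc ∧ l ≠ j.castSucc ∧ l ≠ k.castSucc} :=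
  ⟨Fin.last n, (Fin.castSucc_lt_last i).ne', (Fin.castSucc_lt_last j).ne',
    (Fin.castSucc_lt_last k).ne'⟩

def qhom : Fn3 (n + 1) i.castSucc j.castSucc k.castSucc →* Hgp :=
  PresentedGroup.toGroup
    (f := fun g : Fn3Idx (n + 1) i.castSucc j.castSucc k.castSucc => Fval (g (lastIdx i j k)))
    (by
      rintro r ⟨f, rfl⟩
      rw [map_mul]
      simp only [FreeGroup.lift_apply_of]
      exact Fval_invol _)

lemma qhom_of (f : Fn3Idx (n + 1) i.castSucc j.castSucc k.castSucc) :
    qhom i j k (PresentedGroup.of f) = Fval (f (lastIdx i j k)) :=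
  PresentedGroup.toGroup.of _

def dlt (t : TripleIndex (n + 1)) : ZMod 2 × ZMod 2 × ZMod 2 :=
  (if t.1 = {j.castSucc, k.castSucc, Fin.last n} then 1 else 0,
   if t.1 = {i.castSucc, j.castSucc, Fin.last n} then 1 else 0,
   if t.1 = {i.castSucc, k.castSucc, Fin.last n} then 1 else 0)

def Fv (s : ZMod 2 × ZMod 2 × ZMod 2) : Hgp := Fval (s.1 + s.2.1, s.2.2 + s.2.1)

def QW (s : ZMod 2 × ZMod 2 × ZMod 2) : List (TripleIndex (n + 1)) → Hgp
  | [] => 1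
  | t :: L =>
      (if t.1 = ({i.castSucc, j.castSucc, k.castSucc} : Finset (Fin (n + 1))) then Fv s else 1) *
        QW (s + dlt i j k t) L

def sdl (L : List (TripleIndex (n + 1))) : ZMod 2 × ZMod 2 × ZMod 2 :=
  (L.map (dlt i j k)).sum

def stateOf (pre : List (TripleIndex (n + 1))) : ZMod 2 × ZMod 2 × ZMod 2 :=
  (((cntA pre j.castSucc k.castSucc (Fin.last n) : ℕ) : ZMod 2),
   ((cntA pre i.castSucc j.castSucc (Fin.last n) : ℕ) : ZMod 2),
   ((cntA pre i.castSucc k.castSucc (Fin.last n) : ℕ) : ZMod 2))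

lemma cntA_append (L1 L2 : List (TripleIndex (n + 1))) (x y z : Fin (n + 1)) :
    cntA (L1 ++ L2) x y z = cntA L1 x y z + cntA L2 x y z :=
  List.countP_append

lemma cntA_singleton (t : TripleIndex (n + 1)) (x y z : Fin (n + 1)) :
    cntA [t] x y z = if t.1 = ({x, y, z} : Finset (Fin (n + 1))) then 1 else 0 := by
  unfold cntA
  rw [List.countP_cons, List.countP_nil, Nat.zero_add]
  by_cases h : t.1 = ({x, y, z} : Finset (Fin (n + 1))) <;> simp [h]

lemma stateOf_append_single (pre : List (TripleIndex (n + 1))) (t : TripleIndex (n + 1)) :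
    stateOf i j k (pre ++ [t]) = stateOf i j k pre + dlt i j k t := by
  unfold stateOf dlt
  rw [cntA_append, cntA_append, cntA_append, cntA_singleton, cntA_singleton, cntA_singleton]
  refine Prod.ext ?_ (Prod.ext ?_ ?_) <;>
    · show ((_ + _ : ℕ) : ZMod 2) = _
      rw [Nat.cast_add]
      split_ifs <;> simp

lemma stateOf_nil : stateOf i j k ([] : List (TripleIndex (n + 1))) = 0 := by
  unfold stateOf cntA
  simp

lemma qhom_wRec (L : List (TripleIndex (n + 1))) :
    ∀ pre, qhom i j k (wRec i.castSucc j.castSucc k.castSucc pre L) =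
      QW i j k (stateOf i j k pre) L := by
  induction L with
  | nil => intro pre; show qhom i j k 1 = 1; exact map_one _
  | cons t L ih =>
    intro pre
    simp only [wRec, QW]
    rw [map_mul, apply_ite (qhom i j k), map_one, qhom_of, ih (pre ++ [t]),
      stateOf_append_single]
    congr 1
    split_ifs
    · show Fval (idxOf _ _ _ pre (lastIdx i j k)) = Fv (stateOf i j k pre)
      unfold idxOf Fv stateOf
      rw [Nat.cast_add, Nat.cast_add]
      rfl
    · rfl

lemma qhom_wWord (L : List (TripleIndex (n + 1))) :
    qhom i j k (wWord i.castSucc j.castSucc k.castSucc L) = QW i j k 0 L := by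
  unfold wWord
  rw [qhom_wRec, stateOf_nil]

lemma sdl_append (L1 L2 : List (TripleIndex (n + 1))) :
    sdl i j k (L1 ++ L2) = sdl i j k L1 + sdl i j k L2 := by
  unfold sdl; rw [List.map_append, List.sum_append]

lemma sdl_nil : sdl i j k ([] : List (TripleIndex (n + 1))) = 0 := rfl

lemma QW_append (L1 L2 : List (TripleIndex (n + 1))) :
    ∀ s, QW i j k s (L1 ++ L2) = QW i j k s L1 * QW i j k (s + sdl i j k L1) L2 := by
  induction L1 with
  | nil => intro s; rw [sdl_nil, add_zero]; simp only [QW, List.nil_append]; rw [one_mul]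
  | cons t L1 ih =>
    intro s
    have hs : sdl i j k (t :: L1) = dlt i j k t + sdl i j k L1 := by
      unfold sdl; rw [List.map_cons, List.sum_cons]
    simp only [List.cons_append, QW, List.append_eq]
    rw [ih, hs, mul_assoc, ← add_assoc]

lemma sdl_zero {L : List (TripleIndex (n + 1))} (h0 : ∀ t ∈ L, dlt i j k t = 0) :
    sdl i j k L = 0 := by
  unfold sdl
  apply List.sum_eq_zero
  intro x hx
  obtain ⟨t, ht, rfl⟩ := List.mem_map.mp hx
  exact h0 t ht

lemma QW_no_dlt {L : List (TripleIndex (n + 1))} (h0 : ∀ t ∈ L, dlt i j k t = 0) (s) :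
    QW i j k s L =
      Fv s ^ (L.countP fun t =>
        decide (t.1 = ({i.castSucc, j.castSucc, k.castSucc} : Finset (Fin (n + 1))))) := by
  induction L with
  | nil => rfl
  | cons t L ih =>
    have h0' : ∀ u ∈ L, dlt i j k u = 0 := fun u hu => h0 u (List.mem_cons_of_mem t hu)
    simp only [QW]
    rw [h0 t (List.mem_cons_self), add_zero, ih h0', List.countP_cons]
    by_cases h : t.1 = ({i.castSucc, j.castSucc, k.castSucc} : Finset (Fin (n + 1)))
    · simp only [h, decide_true, if_true, if_pos rfl]
      rw [pow_succ']
    · simp only [if_neg h, decide_eq_true_eq, h, not_false_iff, if_false, add_zero, one_mul]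

lemma QW_inert {L : List (TripleIndex (n + 1))} (h0 : ∀ t ∈ L, dlt i j k t = 0)
    (h1 : (L.countP fun t =>
      decide (t.1 = ({i.castSucc, j.castSucc, k.castSucc} : Finset (Fin (n + 1))))) = 0) (s) :
    QW i j k s L = 1 := by
  rw [QW_no_dlt i j k h0, h1, pow_zero]

lemma QW_occ1 {L : List (TripleIndex (n + 1))} (h0 : ∀ t ∈ L, dlt i j k t = 0)
    (h1 : (L.countP fun t =>
      decide (t.1 = ({i.castSucc, j.castSucc, k.castSucc} : Finset (Fin (n + 1))))) = 1) (s) :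
    QW i j k s L = Fv s := by
  rw [QW_no_dlt i j k h0, h1, pow_one]

end Count
end Stmt10

namespace Stmt10
section Blocks
variable {n : ℕ} {i j k : Fin n}

lemma last_not_mem_cs (a b l : Fin n) :
    Fin.last n ∉ ({a.castSucc, b.castSucc, l.castSucc} : Finset (Fin (n + 1))) := by
  simp only [Finset.mem_insert, Finset.mem_singleton]
  push_neg
  exact ⟨(Fin.castSucc_lt_last a).ne', (Fin.castSucc_lt_last b).ne',
    (Fin.castSucc_lt_last l).ne'⟩

lemma dlt_of_cs (a b l : Fin n) {t : TripleIndex (n + 1)}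
    (ht : t.1 = {a.castSucc, b.castSucc, l.castSucc}) : dlt i j k t = 0 := by
  have hx : ∀ x y : Fin n, t.1 ≠ {x.castSucc, y.castSucc, Fin.last n} := by
    intro x y h
    apply last_not_mem_cs a b l
    rw [← ht, h]
    simp
  unfold dlt
  rw [if_neg (hx j k), if_neg (hx i j), if_neg (hx i k)]
  rfl

lemma not_occ_of_mid {m : Fin n} (hmi : m ≠ i) (hmj : m ≠ j) (hmk : m ≠ k)
    {s : Finset (Fin (n + 1))} (hmem : m.castSucc ∈ s) :
    s ≠ {i.castSucc, j.castSucc, k.castSucc} := by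
  intro h
  rw [h] at hmem
  simp only [Finset.mem_insert, Finset.mem_singleton, Fin.castSucc_inj] at hmem
  rcases hmem with h' | h' | h' <;> [exact hmi h'; exact hmj h'; exact hmk h']

lemma ne_pair {a b m : Fin n} (hma : m ≠ a) (hmb : m ≠ b)
    {s : Finset (Fin (n + 1))} (hmem : m.castSucc ∈ s) :
    s ≠ {a.castSucc, b.castSucc, Fin.last n} := by
  intro h
  rw [h] at hmem
  simp only [Finset.mem_insert, Finset.mem_singleton, Fin.castSucc_inj] at hmem
  rcases hmem with h' | h' | h'
  · exact hma h'
  · exact hmb h'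
  · exact (Fin.castSucc_lt_last m).ne h'

lemma sig_coe (a b : Fin n) (h : a ≠ b) :
    (sigTriple ⟨(a, b), h⟩).1 = {a.castSucc, b.castSucc, Fin.last n} := rfl

lemma sig_swap (a b : Fin n) (h : b ≠ a) :
    (sigTriple ⟨(b, a), h⟩).1 = {a.castSucc, b.castSucc, Fin.last n} := by
  rw [sig_coe]
  exact Finset.insert_comm _ _ _

lemma sig_not_occ {a b : Fin n} (h : a ≠ b) :
    (sigTriple ⟨(a, b), h⟩).1 ≠ ({i.castSucc, j.castSucc, k.castSucc} : Finset (Fin (n+1))) := by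
  intro hq
  apply last_not_mem_cs i j k
  rw [← hq, sig_coe]
  simp

variable (hij : i < j) (hjk : j < k)

section withlt
include hij hjk

lemma dlt_pair_ij {t : TripleIndex (n + 1)}
    (ht : t.1 = {i.castSucc, j.castSucc, Fin.last n}) : dlt i j k t = (0, 1, 0) := by
  unfold dlt
  rw [ht, if_neg (ne_pair (m := i) hij.ne (hij.trans hjk).ne (by simp)),
    if_pos rfl, if_neg (ne_pair (m := j) hij.ne' hjk.ne (by simp))]

lemma dlt_pair_ik {t : TripleIndex (n + 1)}
    (ht : t.1 = {i.castSucc, k.castSucc, Fin.last n}) : dlt i j k t = (0, 0, 1) := by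
  unfold dlt
  rw [ht, if_neg (ne_pair (m := i) hij.ne (hij.trans hjk).ne (by simp)),
    if_neg (ne_pair (m := k) (hij.trans hjk).ne' hjk.ne' (by simp)), if_pos rfl]

lemma dlt_pair_jk {t : TripleIndex (n + 1)}
    (ht : t.1 = {j.castSucc, k.castSucc, Fin.last n}) : dlt i j k t = (1, 0, 0) := by
  unfold dlt
  rw [ht, if_pos rfl, if_neg (ne_pair (m := k) (hij.trans hjk).ne' hjk.ne' (by simp)),
    if_neg (ne_pair (m := j) hij.ne' hjk.ne (by simp))]

lemma dlt_sig_im {m : Fin n} (him : i < m) (hmj : m ≠ j) (hmk : m ≠ k) (h : i ≠ m) :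
    dlt i j k (sigTriple ⟨(i, m), h⟩) = 0 := by
  unfold dlt
  rw [sig_coe, if_neg (ne_pair (m := i) hij.ne (hij.trans hjk).ne (by simp)),
    if_neg (ne_pair (m := m) him.ne' hmj (by simp)),
    if_neg (ne_pair (m := m) him.ne' hmk (by simp))]
  rfl

lemma dlt_sig_jm {m : Fin n} (hjm : j < m) (hmk : m ≠ k) (h : j ≠ m) :
    dlt i j k (sigTriple ⟨(j, m), h⟩) = 0 := by
  unfold dlt
  rw [sig_coe, if_neg (ne_pair (m := m) hjm.ne' hmk (by simp)),
    if_neg (ne_pair (m := m) ((hij.trans hjm).ne') hjm.ne' (by simp)),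
    if_neg (ne_pair (m := j) hij.ne' hjk.ne (by simp))]
  rfl

end withlt

/-- the occurrence predicate -/
def occP (t : TripleIndex (n + 1)) : Bool :=
  decide (t.1 = ({i.castSucc, j.castSucc, k.castSucc} : Finset (Fin (n + 1))))

def Inert (L : List (TripleIndex (n + 1))) : Prop :=
  ∀ t ∈ L, dlt i j k t = 0 ∧
    t.1 ≠ ({i.castSucc, j.castSucc, k.castSucc} : Finset (Fin (n + 1)))

lemma QW_of_inert {L : List (TripleIndex (n + 1))} (h : Inert (i := i) (j := j) (k := k) L)
    (s) : QW i j k s L = 1 :=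
  QW_inert i j k (fun t ht => (h t ht).1)
    (List.countP_eq_zero.mpr fun t ht => by simpa using (h t ht).2) s

lemma sdl_of_inert {L : List (TripleIndex (n + 1))} (h : Inert (i := i) (j := j) (k := k) L) :
    sdl i j k L = 0 :=
  sdl_zero i j k fun t ht => (h t ht).1

lemma inert_append {L1 L2} (h1 : Inert (i := i) (j := j) (k := k) L1)
    (h2 : Inert (i := i) (j := j) (k := k) L2) :
    Inert (i := i) (j := j) (k := k) (L1 ++ L2) := fun t ht =>
  (List.mem_append.mp ht).elim (h1 t) (h2 t)

lemma inert_reverse {L} (h : Inert (i := i) (j := j) (k := k) L) :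
    Inert (i := i) (j := j) (k := k) L.reverse := fun t ht => h t (List.mem_reverse.mp ht)

lemma mem_upL {a b : Fin n} {t : TripleIndex (n + 1)} (h : t ∈ upL a b) :
    ∃ l : Fin n, t.1 = {a.castSucc, b.castSucc, l.castSucc} := by
  obtain ⟨l, _, hl⟩ := List.mem_filterMap.mp h
  exact ⟨l, tri3_mem hl⟩

lemma mem_lowL {a b : Fin n} {t : TripleIndex (n + 1)} (h : t ∈ lowL a b) :
    ∃ l : Fin n, t.1 = {a.castSucc, b.castSucc, l.castSucc} := by
  obtain ⟨l, _, hl⟩ := List.mem_filterMap.mp h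
  exact ⟨l, tri3_mem hl⟩

include hij hjk in
lemma inert_cU_i {m : Fin n} (him : i < m) (hmj : m ≠ j) (hmk : m ≠ k) :
    Inert (i := i) (j := j) (k := k) (cU i m) := by
  intro t ht
  rcases List.mem_append.mp ht with ht' | hlow
  · rcases List.mem_append.mp ht' with hup | hsig
    · obtain ⟨l, hl⟩ := mem_upL hup
      exact ⟨dlt_of_cs i m l hl,
        hl ▸ not_occ_of_mid him.ne' hmj hmk (by simp)⟩
    · rw [sigL, dif_pos him.ne] at hsig
      rcases List.mem_singleton.mp hsig with rfl
      exact ⟨dlt_sig_im hij hjk him hmj hmk him.ne, sig_not_occ him.ne⟩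
  · obtain ⟨l, hl⟩ := mem_lowL hlow
    exact ⟨dlt_of_cs i m l hl,
      hl ▸ not_occ_of_mid him.ne' hmj hmk (by simp)⟩

include hij hjk in
lemma inert_cU_j {m : Fin n} (hjm : j < m) (hmk : m ≠ k) :
    Inert (i := i) (j := j) (k := k) (cU j m) := by
  intro t ht
  have hmi : m ≠ i := ((hij.trans hjm).ne')
  rcases List.mem_append.mp ht with ht' | hlow
  · rcases List.mem_append.mp ht' with hup | hsig
    · obtain ⟨l, hl⟩ := mem_upL hup
      exact ⟨dlt_of_cs j m l hl,
        hl ▸ not_occ_of_mid hmi hjm.ne' hmk (by simp)⟩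
    · rw [sigL, dif_pos hjm.ne] at hsig
      rcases List.mem_singleton.mp hsig with rfl
      exact ⟨dlt_sig_jm hij hjk hjm hmk hjm.ne, sig_not_occ hjm.ne⟩
  · obtain ⟨l, hl⟩ := mem_lowL hlow
    exact ⟨dlt_of_cs j m l hl,
      hl ▸ not_occ_of_mid hmi hjm.ne' hmk (by simp)⟩

lemma mem_mids {a b m : Fin n} : m ∈ mids a b ↔ a < m ∧ m < b := by
  simp [mids, List.mem_filter]

include hij hjk in
lemma inert_preL_ij : Inert (i := i) (j := j) (k := k) (preL i j) := by
  intro t ht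
  obtain ⟨m, hm, htm⟩ := List.mem_flatMap.mp ht
  obtain ⟨him, hmj⟩ := mem_mids.mp hm
  exact inert_cU_i hij hjk him hmj.ne (hmj.trans hjk).ne t (List.mem_reverse.mp htm)

include hij hjk in
lemma inert_preL_jk : Inert (i := i) (j := j) (k := k) (preL j k) := by
  intro t ht
  obtain ⟨m, hm, htm⟩ := List.mem_flatMap.mp ht
  obtain ⟨hjm, hmk⟩ := mem_mids.mp hm
  exact inert_cU_j hij hjk hjm hmk.ne t (List.mem_reverse.mp htm)

end Blocks
end Stmt10

namespace Stmt10
section Counts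
variable {n : ℕ} {i j k : Fin n}

lemma cnt_reverse (p : TripleIndex (n + 1) → Bool) (L : List (TripleIndex (n + 1))) :
    L.reverse.countP p = L.countP p := by
  rw [List.countP_eq_length_filter, List.countP_eq_length_filter, List.filter_reverse,
    List.length_reverse]

lemma trip_eq_iff {a b c : Fin (n + 1)} (hca : c ≠ a) (hcb : c ≠ b) (l : Fin (n + 1)) :
    ({a, b, l} : Finset (Fin (n + 1))) = {a, b, c} ↔ l = c := by
  constructor
  · intro h
    have hc : c ∈ ({a, b, l} : Finset (Fin (n + 1))) := by rw [h]; simp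
    simp only [Finset.mem_insert, Finset.mem_singleton] at hc
    rcases hc with h' | h' | h'
    · exact absurd h' hca
    · exact absurd h' hcb
    · exact h'.symm
  · rintro rfl; rfl

variable (hij : i < j) (hjk : j < k)

include hij hjk in
lemma occ_up_ij (l : Fin n) :
    ({i.castSucc, j.castSucc, l.castSucc} : Finset (Fin (n + 1))) =
      {i.castSucc, j.castSucc, k.castSucc} ↔ l = k := by
  rw [trip_eq_iff (by simp [Fin.castSucc_inj]; exact (hij.trans hjk).ne')
    (by simp [Fin.castSucc_inj]; exact hjk.ne') l.castSucc]
  exact Fin.castSucc_inj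

include hij hjk in
lemma occ_ik (l : Fin n) :
    ({i.castSucc, k.castSucc, l.castSucc} : Finset (Fin (n + 1))) =
      {i.castSucc, j.castSucc, k.castSucc} ↔ l = j := by
  have hs : ({i.castSucc, j.castSucc, k.castSucc} : Finset (Fin (n + 1))) =
      {i.castSucc, k.castSucc, j.castSucc} := by
    apply congrArg
    exact Finset.pair_comm _ _
  rw [hs, trip_eq_iff (by simp [Fin.castSucc_inj]; exact hij.ne')
    (by simp [Fin.castSucc_inj]; exact hjk.ne) l.castSucc]
  exact Fin.castSucc_inj

include hij hjk in
lemma occ_jk (l : Fin n) :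
    ({j.castSucc, k.castSucc, l.castSucc} : Finset (Fin (n + 1))) =
      {i.castSucc, j.castSucc, k.castSucc} ↔ l = i := by
  have hs : ({i.castSucc, j.castSucc, k.castSucc} : Finset (Fin (n + 1))) =
      {j.castSucc, k.castSucc, i.castSucc} := by
    rw [Finset.insert_comm]
    apply congrArg
    exact Finset.pair_comm _ _
  rw [hs, trip_eq_iff (by simp [Fin.castSucc_inj]; exact hij.ne)
    (by simp [Fin.castSucc_inj]; exact (hij.trans hjk).ne) l.castSucc]
  exact Fin.castSucc_inj

include hij hjk in
lemma card_ijk :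
    ({i.castSucc, j.castSucc, k.castSucc} : Finset (Fin (n + 1))).card = 3 :=
  Finset.card_eq_three.mpr ⟨_, _, _, by simp [Fin.castSucc_inj]; exact hij.ne,
    by simp [Fin.castSucc_inj]; exact (hij.trans hjk).ne,
    by simp [Fin.castSucc_inj]; exact hjk.ne, rfl⟩

include hij hjk in
lemma cnt_filterMap (a b : Fin n) (L : List (Fin n)) :
    (L.filterMap fun l => tri3 a.castSucc b.castSucc l.castSucc).countP
        (fun t => decide (t.1 = ({i.castSucc, j.castSucc, k.castSucc} : Finset (Fin (n+1))))) =
      L.countP fun l =>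
        decide (({a.castSucc, b.castSucc, l.castSucc} : Finset (Fin (n + 1))) =
          {i.castSucc, j.castSucc, k.castSucc}) := by
  induction L with
  | nil => rfl
  | cons l L ih =>
    rw [List.filterMap_cons]
    by_cases h3 : ({a.castSucc, b.castSucc, l.castSucc} : Finset (Fin (n + 1))).card = 3
    · have : tri3 a.castSucc b.castSucc l.castSucc =
        some ⟨{a.castSucc, b.castSucc, l.castSucc}, h3⟩ := dif_pos h3
      rw [this, List.countP_cons, List.countP_cons, ih]
    · have : tri3 a.castSucc b.castSucc l.castSucc = none := dif_neg h3
      rw [this, List.countP_cons, ih]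
      have hne : ¬ (({a.castSucc, b.castSucc, l.castSucc} : Finset (Fin (n + 1))) =
          {i.castSucc, j.castSucc, k.castSucc}) := fun h => h3 (h ▸ card_ijk hij hjk)
      simp [hne]

lemma cnt_fil_eq (p : Fin n → Bool) (c : Fin n) (hc : p c = true)
    (q : Fin n → Bool) (hq : ∀ l, q l = true ↔ l = c) :
    ((List.finRange n).filter p).countP q = 1 := by
  have h1 : ((List.finRange n).filter p).countP q =
      ((List.finRange n).filter p).countP (· == c) := by
    apply List.countP_congr
    intro l _
    rw [hq l, beq_iff_eq]
  rw [h1]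
  show List.count c _ = 1
  rw [List.count_filter hc]
  exact List.count_eq_one_of_mem (List.nodup_finRange n) (List.mem_finRange c)

lemma cnt_fil_zero (p : Fin n → Bool) (c : Fin n) (hc : p c = false)
    (q : Fin n → Bool) (hq : ∀ l, q l = true ↔ l = c) :
    ((List.finRange n).filter p).countP q = 0 := by
  apply List.countP_eq_zero.mpr
  intro l hl
  intro hql
  rcases (hq l).mp hql with rfl
  rw [List.mem_filter] at hl
  rw [hl.2] at hc
  simp at hc

-- occurrence counts in the six up/low blocks
include hij hjk in
lemma cnt_upL_ij : (upL i j).countP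
      (fun t => decide (t.1 = ({i.castSucc, j.castSucc, k.castSucc} : Finset (Fin (n+1))))) = 1 := by
  unfold upL
  rw [cnt_filterMap hij hjk]
  exact cnt_fil_eq _ k (by simp [hjk]) _ (fun l => by
    rw [decide_eq_true_eq]; exact occ_up_ij hij hjk l)

include hij hjk in
lemma cnt_lowL_ij : (lowL i j).countP
      (fun t => decide (t.1 = ({i.castSucc, j.castSucc, k.castSucc} : Finset (Fin (n+1))))) = 0 := by
  unfold lowL
  rw [cnt_filterMap hij hjk]
  exact cnt_fil_zero _ k (by simp [le_of_lt (hjk : j < k)]) _ (fun l => by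
    rw [decide_eq_true_eq]; exact occ_up_ij hij hjk l)

include hij hjk in
lemma cnt_upL_ik : (upL i k).countP
      (fun t => decide (t.1 = ({i.castSucc, j.castSucc, k.castSucc} : Finset (Fin (n+1))))) = 0 := by
  unfold upL
  rw [cnt_filterMap hij hjk]
  exact cnt_fil_zero _ j (by simp; exact le_of_lt hjk) _ (fun l => by
    rw [decide_eq_true_eq]; exact occ_ik hij hjk l)

include hij hjk in
lemma cnt_lowL_ik : (lowL i k).countP
      (fun t => decide (t.1 = ({i.castSucc, j.castSucc, k.castSucc} : Finset (Fin (n+1))))) = 1 := by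
  unfold lowL
  rw [cnt_filterMap hij hjk]
  exact cnt_fil_eq _ j (by simp [hjk]) _ (fun l => by
    rw [decide_eq_true_eq]; exact occ_ik hij hjk l)

include hij hjk in
lemma cnt_upL_jk : (upL j k).countP
      (fun t => decide (t.1 = ({i.castSucc, j.castSucc, k.castSucc} : Finset (Fin (n+1))))) = 0 := by
  unfold upL
  rw [cnt_filterMap hij hjk]
  exact cnt_fil_zero _ i (by simp; exact le_of_lt (hij.trans hjk)) _ (fun l => by
    rw [decide_eq_true_eq]; exact occ_jk hij hjk l)

include hij hjk in
lemma cnt_lowL_jk : (lowL j k).countP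
      (fun t => decide (t.1 = ({i.castSucc, j.castSucc, k.castSucc} : Finset (Fin (n+1))))) = 1 := by
  unfold lowL
  rw [cnt_filterMap hij hjk]
  exact cnt_fil_eq _ i (by simp [hij.trans hjk]) _ (fun l => by
    rw [decide_eq_true_eq]; exact occ_jk hij hjk l)

end Counts
end Stmt10

namespace Stmt10
section Eval
variable {n : ℕ} {i j k : Fin n}

lemma Fv_a : Fv ((0, 0, 0) : ZMod 2 × ZMod 2 × ZMod 2) = αH := by
  unfold Fv Fval
  rw [if_pos (by decide)]

lemma Fv_a0 : Fv (0 : ZMod 2 × ZMod 2 × ZMod 2) = αH := by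
  unfold Fv Fval
  rw [if_pos (by decide)]

lemma Fv_b : Fv ((0, 1, 0) : ZMod 2 × ZMod 2 × ZMod 2) = βH := by
  unfold Fv Fval
  rw [if_neg (by decide), if_pos (by decide)]

lemma Fv_c' : Fv ((0, 1, 1) : ZMod 2 × ZMod 2 × ZMod 2) = γH := by
  unfold Fv Fval
  rw [if_neg (by decide), if_neg (by decide), if_pos (by decide)]

lemma Fv_c : Fv ((1, 0, 0) : ZMod 2 × ZMod 2 × ZMod 2) = γH := by
  unfold Fv Fval
  rw [if_neg (by decide), if_neg (by decide), if_pos (by decide)]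

lemma QW_single (s) (t : TripleIndex (n + 1))
    (hocc : t.1 ≠ ({i.castSucc, j.castSucc, k.castSucc} : Finset (Fin (n + 1)))) :
    QW i j k s [t] = 1 := by
  simp only [QW]
  rw [if_neg hocc, one_mul]

lemma sdl_single (t : TripleIndex (n + 1)) : sdl i j k [t] = dlt i j k t := by
  unfold sdl
  simp

lemma QW_three (A B C : List (TripleIndex (n + 1))) (s) :
    QW i j k s (A ++ B ++ C) = QW i j k s A * QW i j k (s + sdl i j k A) B *
      QW i j k (s + sdl i j k A + sdl i j k B) C := by
  rw [QW_append, QW_append, sdl_append, ← add_assoc]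

lemma QW_four (A B C D : List (TripleIndex (n + 1))) (s) :
    QW i j k s (A ++ B ++ C ++ D) = QW i j k s A * QW i j k (s + sdl i j k A) B *
      QW i j k (s + sdl i j k A + sdl i j k B) C *
      QW i j k (s + sdl i j k A + sdl i j k B + sdl i j k C) D := by
  rw [QW_append, QW_three, sdl_append, sdl_append, ← add_assoc, ← add_assoc]

variable (hij : i < j) (hjk : j < k)

lemma dlt0_upL (a b : Fin n) : ∀ t ∈ upL a b, dlt i j k t = 0 := fun t ht => by
  obtain ⟨l, hl⟩ := mem_upL ht; exact dlt_of_cs a b l hl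

lemma dlt0_lowL (a b : Fin n) : ∀ t ∈ lowL a b, dlt i j k t = 0 := fun t ht => by
  obtain ⟨l, hl⟩ := mem_lowL ht; exact dlt_of_cs a b l hl

lemma sigL_eq (a b : Fin n) (h : a ≠ b) : sigL a b = [sigTriple ⟨(a, b), h⟩] := by
  rw [sigL, dif_pos h]

include hij hjk in
lemma QW_cU_ij (s) : QW i j k s (cU i j) = Fv s := by
  unfold cU
  rw [QW_three, QW_occ1 i j k (dlt0_upL i j) (cnt_upL_ij hij hjk),
    sigL_eq i j hij.ne, QW_single _ _ (sig_not_occ hij.ne),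
    QW_inert i j k (dlt0_lowL i j) (cnt_lowL_ij hij hjk), mul_one, mul_one]

include hij hjk in
lemma sdl_cU_ij : sdl i j k (cU i j) = (0, 1, 0) := by
  unfold cU
  rw [sdl_append, sdl_append, sdl_zero i j k (dlt0_upL i j), sdl_zero i j k (dlt0_lowL i j),
    sigL_eq i j hij.ne, sdl_single, dlt_pair_ij hij hjk (sig_coe i j hij.ne)]
  decide

include hij hjk in
lemma QW_cV_ij (s) : QW i j k s (cV i j) = Fv s := by
  unfold cV
  rw [QW_three, QW_occ1 i j k (dlt0_upL i j) (cnt_upL_ij hij hjk),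
    sigL_eq j i hij.ne', QW_single _ _ (sig_not_occ hij.ne'),
    QW_inert i j k (dlt0_lowL i j) (cnt_lowL_ij hij hjk), mul_one, mul_one]

include hij hjk in
lemma sdl_cV_ij : sdl i j k (cV i j) = (0, 1, 0) := by
  unfold cV
  rw [sdl_append, sdl_append, sdl_zero i j k (dlt0_upL i j), sdl_zero i j k (dlt0_lowL i j),
    sigL_eq j i hij.ne', sdl_single, dlt_pair_ij hij hjk (sig_swap i j hij.ne')]
  decide

include hij hjk in
lemma QW_cU_ik (s) : QW i j k s (cU i k) = Fv (s + (0, 0, 1)) := by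
  unfold cU
  have hik : i ≠ k := (hij.trans hjk).ne
  rw [QW_three, QW_inert i j k (dlt0_upL i k) (cnt_upL_ik hij hjk),
    sigL_eq i k hik, QW_single _ _ (sig_not_occ hik),
    QW_occ1 i j k (dlt0_lowL i k) (cnt_lowL_ik hij hjk), one_mul, one_mul,
    sdl_zero i j k (dlt0_upL i k), sdl_single,
    dlt_pair_ik hij hjk (sig_coe i k hik), add_zero]

include hij hjk in
lemma sdl_cU_ik : sdl i j k (cU i k) = (0, 0, 1) := by
  unfold cU
  have hik : i ≠ k := (hij.trans hjk).ne
  rw [sdl_append, sdl_append, sdl_zero i j k (dlt0_upL i k), sdl_zero i j k (dlt0_lowL i k),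
    sigL_eq i k hik, sdl_single, dlt_pair_ik hij hjk (sig_coe i k hik)]
  decide

include hij hjk in
lemma QW_cV_ik (s) : QW i j k s (cV i k) = Fv (s + (0, 0, 1)) := by
  unfold cV
  have hki : k ≠ i := (hij.trans hjk).ne'
  rw [QW_three, QW_inert i j k (dlt0_upL i k) (cnt_upL_ik hij hjk),
    sigL_eq k i hki, QW_single _ _ (sig_not_occ hki),
    QW_occ1 i j k (dlt0_lowL i k) (cnt_lowL_ik hij hjk), one_mul, one_mul,
    sdl_zero i j k (dlt0_upL i k), sdl_single,
    dlt_pair_ik hij hjk (sig_swap i k hki), add_zero]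

include hij hjk in
lemma sdl_cV_ik : sdl i j k (cV i k) = (0, 0, 1) := by
  unfold cV
  have hki : k ≠ i := (hij.trans hjk).ne'
  rw [sdl_append, sdl_append, sdl_zero i j k (dlt0_upL i k), sdl_zero i j k (dlt0_lowL i k),
    sigL_eq k i hki, sdl_single, dlt_pair_ik hij hjk (sig_swap i k hki)]
  decide

include hij hjk in
lemma QW_cU_jk (s) : QW i j k s (cU j k) = Fv (s + (1, 0, 0)) := by
  unfold cU
  rw [QW_three, QW_inert i j k (dlt0_upL j k) (cnt_upL_jk hij hjk),
    sigL_eq j k hjk.ne, QW_single _ _ (sig_not_occ hjk.ne),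
    QW_occ1 i j k (dlt0_lowL j k) (cnt_lowL_jk hij hjk), one_mul, one_mul,
    sdl_zero i j k (dlt0_upL j k), sdl_single,
    dlt_pair_jk hij hjk (sig_coe j k hjk.ne), add_zero]

include hij hjk in
lemma sdl_cU_jk : sdl i j k (cU j k) = (1, 0, 0) := by
  unfold cU
  rw [sdl_append, sdl_append, sdl_zero i j k (dlt0_upL j k), sdl_zero i j k (dlt0_lowL j k),
    sigL_eq j k hjk.ne, sdl_single, dlt_pair_jk hij hjk (sig_coe j k hjk.ne)]
  decide

include hij hjk in
lemma QW_cV_jk (s) : QW i j k s (cV j k) = Fv (s + (1, 0, 0)) := by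
  unfold cV
  rw [QW_three, QW_inert i j k (dlt0_upL j k) (cnt_upL_jk hij hjk),
    sigL_eq k j hjk.ne', QW_single _ _ (sig_not_occ hjk.ne'),
    QW_occ1 i j k (dlt0_lowL j k) (cnt_lowL_jk hij hjk), one_mul, one_mul,
    sdl_zero i j k (dlt0_upL j k), sdl_single,
    dlt_pair_jk hij hjk (sig_swap j k hjk.ne'), add_zero]

include hij hjk in
lemma sdl_cV_jk : sdl i j k (cV j k) = (1, 0, 0) := by
  unfold cV
  rw [sdl_append, sdl_append, sdl_zero i j k (dlt0_upL j k), sdl_zero i j k (dlt0_lowL j k),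
    sigL_eq k j hjk.ne', sdl_single, dlt_pair_jk hij hjk (sig_swap j k hjk.ne')]
  decide

/-- reversed middle block `c_{i,j}⁻¹`. -/
lemma cU_ij_reverse :
    (cU i j).reverse = (lowL i j).reverse ++ sigL i j ++ (upL i j).reverse := by
  unfold cU
  rw [List.reverse_append, List.reverse_append]
  rcases eq_or_ne i j with h | h
  · rw [sigL, dif_neg (fun h' => h' h)]
    simp
  · rw [sigL_eq i j h]
    simp [List.append_assoc]

include hij hjk in
lemma cnt_upL_ij_rev : ((upL i j).reverse.countP
    (fun t => decide (t.1 = ({i.castSucc, j.castSucc, k.castSucc} : Finset (Fin (n+1)))))) = 1 := by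
  rw [cnt_reverse]
  exact cnt_upL_ij hij hjk

include hij hjk in
lemma cnt_lowL_ij_rev : ((lowL i j).reverse.countP
    (fun t => decide (t.1 = ({i.castSucc, j.castSucc, k.castSucc} : Finset (Fin (n+1)))))) = 0 := by
  rw [cnt_reverse]
  exact cnt_lowL_ij hij hjk

lemma dlt0_upL_rev (a b : Fin n) : ∀ t ∈ (upL a b).reverse, dlt i j k t = 0 :=
  fun t ht => dlt0_upL a b t (List.mem_reverse.mp ht)

lemma dlt0_lowL_rev (a b : Fin n) : ∀ t ∈ (lowL a b).reverse, dlt i j k t = 0 :=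
  fun t ht => dlt0_lowL a b t (List.mem_reverse.mp ht)

include hij hjk in
lemma QW_cUr_ij (s) : QW i j k s ((cU i j).reverse) = Fv (s + (0, 1, 0)) := by
  rw [cU_ij_reverse, QW_three,
    QW_inert i j k (dlt0_lowL_rev i j) (cnt_lowL_ij_rev hij hjk),
    sigL_eq i j hij.ne, QW_single _ _ (sig_not_occ hij.ne),
    QW_occ1 i j k (dlt0_upL_rev i j) (cnt_upL_ij_rev hij hjk), one_mul, one_mul,
    sdl_zero i j k (dlt0_lowL_rev i j), sdl_single,
    dlt_pair_ij hij hjk (sig_coe i j hij.ne), add_zero]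

include hij hjk in
lemma sdl_cUr_ij : sdl i j k ((cU i j).reverse) = (0, 1, 0) := by
  rw [cU_ij_reverse, sdl_append, sdl_append, sdl_zero i j k (dlt0_lowL_rev i j),
    sdl_zero i j k (dlt0_upL_rev i j), sigL_eq i j hij.ne, sdl_single,
    dlt_pair_ij hij hjk (sig_coe i j hij.ne)]
  decide

end Eval
end Stmt10

namespace Stmt10
section Split

lemma filter_three {α : Type*} [LinearOrder α] {L : List α} (hL : L.Pairwise (· < ·))
    {c : α} (hc : c ∈ L) {p : α → Bool} (hpc : p c = true) :
    L.filter p = (L.filter fun m => p m && decide (m < c)) ++ [c] ++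
      (L.filter fun m => p m && decide (c < m)) := by
  induction L with
  | nil => cases hc
  | cons a L ih =>
    have ha := (List.pairwise_cons.mp hL).1
    have hL' := (List.pairwise_cons.mp hL).2
    rcases List.mem_cons.mp hc with rfl | hc'
    · rw [List.filter_cons_of_pos hpc]
      have h1 : List.filter (fun m => p m && decide (m < c)) (c :: L) = [] := by
        rw [List.filter_eq_nil_iff]
        intro x hx
        rcases List.mem_cons.mp hx with rfl | hx'
        · simp
        · simp [not_lt.mpr (ha x hx').le]
      have h2 : List.filter (fun m => p m && decide (c < m)) (c :: L) = List.filter p L := by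
        rw [List.filter_cons_of_neg (by simp)]
        apply List.filter_congr
        intro x hx
        simp [ha x hx]
      rw [h1, h2]
      simp
    · have hac : a < c := ha c hc'
      by_cases hpa : p a = true
      · rw [List.filter_cons_of_pos hpa, List.filter_cons_of_pos (by simp [hpa, hac]),
          List.filter_cons_of_neg (by simp [hpa, not_lt.mpr hac.le]), ih hL' hc']
        simp
      · rw [List.filter_cons_of_neg hpa, List.filter_cons_of_neg (by simp [hpa]),
          List.filter_cons_of_neg (by simp [hpa])]
        exact ih hL' hc'

variable {n : ℕ} {i j k : Fin n} (hij : i < j) (hjk : j < k)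

include hij hjk in
lemma mids_split : mids i k = mids i j ++ [j] ++ mids j k := by
  unfold mids
  rw [filter_three (List.pairwise_lt_finRange n) (List.mem_finRange j)
    (p := fun m => decide (i < m ∧ m < k)) (by simp [hij, hjk])]
  congr 1
  · congr 1
    apply List.filter_congr
    intro m _
    by_cases h1 : i < m <;> by_cases h2 : m < j <;>
      simp [h1, h2, fun h : m < j => h.trans hjk]
  · apply List.filter_congr
    intro m _
    by_cases h1 : j < m <;> by_cases h2 : m < k <;>
      simp [h1, h2, fun h : j < m => hij.trans h]

include hij hjk in
lemma preL_ik_split :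
    preL i k = preL i j ++ ((cU i j).reverse ++
      ((mids j k).flatMap fun m => (cU i m).reverse)) := by
  unfold preL
  rw [mids_split hij hjk, List.flatMap_append, List.flatMap_append]
  simp [List.append_assoc]

include hij hjk in
lemma inert_A2 : Inert (i := i) (j := j) (k := k)
    ((mids j k).flatMap fun m => (cU i m).reverse) := by
  intro t ht
  obtain ⟨m, hm, htm⟩ := List.mem_flatMap.mp ht
  obtain ⟨hjm, hmk⟩ := mem_mids.mp hm
  exact inert_cU_i hij hjk (hij.trans hjm) hjm.ne' hmk.ne t (List.mem_reverse.mp htm)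

include hij hjk in
lemma QW_x : QW i j k 0 (bigL i j) = αH * βH := by
  have hpre := inert_preL_ij hij hjk
  unfold bigL
  rw [QW_four, QW_of_inert hpre, QW_of_inert (inert_reverse hpre), sdl_of_inert hpre,
    QW_cU_ij hij hjk, sdl_cU_ij hij hjk, QW_cV_ij hij hjk]
  rw [show ((0 : ZMod 2 × ZMod 2 × ZMod 2) + 0) = (0, 0, 0) by decide,
    show (((0, 0, 0) : ZMod 2 × ZMod 2 × ZMod 2) + (0, 1, 0)) = (0, 1, 0) by decide,
    Fv_a, Fv_b, one_mul, mul_one]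

include hij hjk in
lemma QW_y : QW i j k 0 (bigL i k) = βH * γH := by
  have hA1 := inert_preL_ij hij hjk
  have hA2 := inert_A2 hij hjk
  have hpre := preL_ik_split hij hjk
  -- value and sdl of preL i k
  have hsplit2 : QW i j k 0 (preL i k) = βH := by
    rw [hpre, QW_append, QW_append, QW_of_inert hA1, QW_of_inert hA2, sdl_of_inert hA1,
      QW_cUr_ij hij hjk, one_mul, mul_one]
    rw [show ((0 : ZMod 2 × ZMod 2 × ZMod 2) + 0) = (0, 0, 0) by decide,
      show (((0, 0, 0) : ZMod 2 × ZMod 2 × ZMod 2) + (0, 1, 0)) = (0, 1, 0) by decide]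
    exact Fv_b
  have hsdlpre : sdl i j k (preL i k) = (0, 1, 0) := by
    rw [hpre, sdl_append, sdl_append, sdl_of_inert hA1, sdl_of_inert hA2,
      sdl_cUr_ij hij hjk]
    decide
  -- suffix
  have hsufrev : (preL i k).reverse =
      ((mids j k).flatMap fun m => (cU i m).reverse).reverse ++ (cU i j) ++
        (preL i j).reverse := by
    rw [hpre, List.reverse_append, List.reverse_append, List.reverse_reverse,
      List.append_assoc]
  have hsuf : ∀ s, QW i j k s ((preL i k).reverse) = QW i j k s (cU i j) := by
    intro s
    rw [hsufrev, QW_append, QW_append, QW_of_inert (inert_reverse hA2),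
      QW_of_inert (inert_reverse hA1), sdl_of_inert (inert_reverse hA2), add_zero, one_mul,
      mul_one]
  unfold bigL
  rw [QW_four, hsplit2, hsdlpre, QW_cU_ik hij hjk, sdl_cU_ik hij hjk, QW_cV_ik hij hjk,
    sdl_cV_ik hij hjk, hsuf, QW_cU_ij hij hjk]
  rw [show ((0 : ZMod 2 × ZMod 2 × ZMod 2) + (0, 1, 0) + (0, 0, 1)) = (0, 1, 1) by decide,
    show (((0, 1, 1) : ZMod 2 × ZMod 2 × ZMod 2) + (0, 0, 1)) = (0, 1, 0) by decide,
    Fv_c', Fv_b, mul_assoc, hββ, mul_one]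

include hij hjk in
lemma QW_z : QW i j k 0 (bigL j k) = γH * αH := by
  have hpre := inert_preL_jk hij hjk
  unfold bigL
  rw [QW_four, QW_of_inert hpre, QW_of_inert (inert_reverse hpre), sdl_of_inert hpre,
    QW_cU_jk hij hjk, sdl_cU_jk hij hjk, QW_cV_jk hij hjk]
  rw [show ((0 : ZMod 2 × ZMod 2 × ZMod 2) + 0 + (1, 0, 0)) = (1, 0, 0) by decide,
    show (((1, 0, 0) : ZMod 2 × ZMod 2 × ZMod 2) + (1, 0, 0)) = (0, 0, 0) by decide,
    Fv_c, Fv_a, one_mul, mul_one]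

end Split
end Stmt10

namespace Stmt10
section Final
variable {n : ℕ} {i j k : Fin n}

lemma psi_gen (hij : i < j) (hjk : j < k)
    (φt : PBn n →* TGn3 n) (hφt : ∀ p : PBGen n, φt (PresentedGroup.of p) = tphiGen p)
    (π : TGn3 n →* Gn3 (n + 1)) (hπ : ∀ g : TGen n, π (PresentedGroup.of g) = piGen g)
    (w : Gn3 (n + 1) →* Fn3 (n + 1) i.castSucc j.castSucc k.castSucc)
    (hw : ∀ L : List (TripleIndex (n + 1)),
      w (gn3Word L) = wWord i.castSucc j.castSucc k.castSucc L)
    (a b : Fin n) (hab : a < b) :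
    qhom i j k (w (π (φt (PresentedGroup.of ⟨(a, b), hab⟩)))) = QW i j k 0 (bigL a b) := by
  rw [hφt]
  unfold tphiGen
  rw [map_tphiWord]
  have hfa : (fun t : TripleIndex n => π (PresentedGroup.of (Sum.inl t))) =
      fun t : TripleIndex n => (PresentedGroup.of (castTriple t) : Gn3 (n + 1)) :=
    funext fun t => hπ (Sum.inl t)
  have hfs : (fun p : SGen n => π (PresentedGroup.of (Sum.inr p))) =
      fun p : SGen n => (PresentedGroup.of (sigTriple p) : Gn3 (n + 1)) :=
    funext fun p => hπ (Sum.inr p)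
  rw [hfa, hfs]
  show qhom i j k (w (tphiWord _ _ a b)) = _
  rw [tphi_eq, hw, qhom_wWord]

end Final
end Stmt10

open Stmt10 in
theorem wtilde_trivial_implies_product' (n : ℕ) (i j k : Fin n) (hij : i < j) (hjk : j < k)
    (φt : PBn n →* TGn3 n) (hφt : ∀ p : PBGen n, φt (PresentedGroup.of p) = tphiGen p)
    (π : TGn3 n →* Gn3 (n + 1)) (hπ : ∀ g : TGen n, π (PresentedGroup.of g) = piGen g)
    (w : Gn3 (n + 1) →* Fn3 (n + 1) i.castSucc j.castSucc k.castSucc)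
    (hw : ∀ L : List (TripleIndex (n + 1)),
      w (gn3Word L) = wWord i.castSucc j.castSucc k.castSucc L)
    (P : PBn n)
    (hP : P ∈ Subgroup.closure
      {(PresentedGroup.of ⟨(i, j), hij⟩ : PBn n),
        PresentedGroup.of ⟨(i, k), hij.trans hjk⟩, PresentedGroup.of ⟨(j, k), hjk⟩})
    (hPw : w (π (φt P)) = 1) :
    P ∈ Subgroup.closure
      {(PresentedGroup.of ⟨(i, j), hij⟩ : PBn n) * PresentedGroup.of ⟨(i, k), hij.trans hjk⟩ *
          PresentedGroup.of ⟨(j, k), hjk⟩,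
        (PresentedGroup.of ⟨(j, k), hjk⟩ : PBn n) * PresentedGroup.of ⟨(i, k), hij.trans hjk⟩ *
          PresentedGroup.of ⟨(i, j), hij⟩} := by
  have hik : i < k := hij.trans hjk
  set xh : PBn n := PresentedGroup.of ⟨(i, j), hij⟩ with hxh
  set yh : PBn n := PresentedGroup.of ⟨(i, k), hik⟩ with hyh
  set zh : PBn n := PresentedGroup.of ⟨(j, k), hjk⟩ with hzh
  set Δ : PBn n := xh * yh * zh with hΔ
  -- the evaluation homomorphism
  set Ψ : PBn n →* Hgp := ((qhom i j k).comp w).comp (π.comp φt) with hΨ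
  have hΨP : Ψ P = 1 := by
    show qhom i j k (w (π (φt P))) = 1
    rw [hPw, map_one]
  have hgen0 : Ψ xh = αH * βH := by
    show qhom i j k (w (π (φt (PresentedGroup.of ⟨(i, j), hij⟩)))) = _
    rw [psi_gen hij hjk φt hφt π hπ w hw i j hij, QW_x hij hjk]
  have hgen1 : Ψ yh = βH * γH := by
    show qhom i j k (w (π (φt (PresentedGroup.of ⟨(i, k), hik⟩)))) = _
    rw [psi_gen hij hjk φt hφt π hπ w hw i k hik, QW_y hij hjk]
  have hgen2 : Ψ zh = γH * αH := by
    show qhom i j k (w (π (φt (PresentedGroup.of ⟨(j, k), hjk⟩)))) = _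
    rw [psi_gen hij hjk φt hφt π hπ w hw j k hjk, QW_z hij hjk]
  -- P is a word in the three generators
  set θ : FreeGroup (Fin 3) →* PBn n := FreeGroup.lift ![xh, yh, zh] with hθ
  have hθ0 : θ (FreeGroup.of 0) = xh := by rw [hθ, FreeGroup.lift_apply_of]; rfl
  have hθ1 : θ (FreeGroup.of 1) = yh := by rw [hθ, FreeGroup.lift_apply_of]; rfl
  have hθ2 : θ (FreeGroup.of 2) = zh := by rw [hθ, FreeGroup.lift_apply_of]; rfl
  have hrange : P ∈ θ.range := by
    refine (Subgroup.closure_le θ.range).mpr ?_ hP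
    rintro g hg
    rcases hg with rfl | rfl | rfl
    · exact ⟨FreeGroup.of 0, hθ0⟩
    · exact ⟨FreeGroup.of 1, hθ1⟩
    · exact ⟨FreeGroup.of 2, hθ2⟩
  obtain ⟨W, hW⟩ := hrange
  -- Ψ ∘ θ = embH ∘ ρ3
  have hcomp : Ψ.comp θ = embH.comp ρ3 := by
    apply FreeGroup.ext_hom
    intro a
    fin_cases a
    · show Ψ (θ (FreeGroup.of 0)) = embH (ρ3 (FreeGroup.of 0))
      rw [hθ0, hgen0, embH_ρ3_0]
    · show Ψ (θ (FreeGroup.of 1)) = embH (ρ3 (FreeGroup.of 1))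
      rw [hθ1, hgen1, embH_ρ3_1]
    · show Ψ (θ (FreeGroup.of 2)) = embH (ρ3 (FreeGroup.of 2))
      rw [hθ2, hgen2, embH_ρ3_2]
  have hρW : ρ3 W = 1 := by
    apply embH_injective
    have : embH (ρ3 W) = Ψ (θ W) := (DFunLike.congr_fun hcomp W).symm
    rw [this, hW, hΨP, map_one]
  -- the subgroup K
  have hcW : ∀ V : FreeGroup (Fin 3), Commute (θ V) Δ := by
    intro V
    induction V using FreeGroup.induction_on with
    | C1 => exact Commute.one_left Δ
    | of a =>
        fin_cases a
        · show Commute (θ (FreeGroup.of 0)) Δ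
          rw [hθ0]; exact comm_x i j k hij hjk hik
        · show Commute (θ (FreeGroup.of 1)) Δ
          rw [hθ1]; exact comm_y i j k hij hjk hik
        · show Commute (θ (FreeGroup.of 2)) Δ
          rw [hθ2]; exact comm_z i j k hij hjk hik
    | inv_of a ha => rw [map_inv]; exact ha.inv_left
    | mul a b ha hb => rw [map_mul]; exact ha.mul_left hb
  set K : Subgroup (FreeGroup (Fin 3)) := (Subgroup.zpowers Δ).comap θ with hK
  haveI hKnorm : K.Normal := by
    constructor
    intro u hu g
    rw [hK, Subgroup.mem_comap] at hu ⊢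
    obtain ⟨m, hm⟩ := Subgroup.mem_zpowers_iff.mp hu
    rw [map_mul, map_mul, map_inv, ← hm]
    refine Subgroup.mem_zpowers_iff.mpr ⟨m, ?_⟩
    have hcm : Commute (θ g) (Δ ^ m) := (hcW g).zpow_right m
    rw [hcm.eq]
    group
  have hXYZ : FreeGroup.of 0 * FreeGroup.of 1 * FreeGroup.of 2 ∈ K := by
    rw [hK, Subgroup.mem_comap, map_mul, map_mul, hθ0, hθ1, hθ2]
    exact Subgroup.mem_zpowers Δ
  -- quotient argument: ker ρ3 ≤ K
  have hWK : W ∈ K := by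
    set u : F2 →* FreeGroup (Fin 3) ⧸ K :=
      FreeGroup.lift ![QuotientGroup.mk (FreeGroup.of 0),
        QuotientGroup.mk (FreeGroup.of 1)] with hu
    have hu0 : u (FreeGroup.of 0) = QuotientGroup.mk (FreeGroup.of 0) := by
      rw [hu, FreeGroup.lift_apply_of]; rfl
    have hu1 : u (FreeGroup.of 1) = QuotientGroup.mk (FreeGroup.of 1) := by
      rw [hu, FreeGroup.lift_apply_of]; rfl
    have hucomp : u.comp ρ3 = QuotientGroup.mk' K := by
      apply FreeGroup.ext_hom
      intro a
      fin_cases a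
      · show u (ρ3 (FreeGroup.of 0)) = QuotientGroup.mk (FreeGroup.of 0)
        rw [ρ3, FreeGroup.lift_apply_of]
        show u (FreeGroup.of 0) = _
        exact hu0
      · show u (ρ3 (FreeGroup.of 1)) = QuotientGroup.mk (FreeGroup.of 1)
        rw [ρ3, FreeGroup.lift_apply_of]
        show u (FreeGroup.of 1) = _
        exact hu1
      · show u (ρ3 (FreeGroup.of 2)) = QuotientGroup.mk (FreeGroup.of 2)
        rw [ρ3, FreeGroup.lift_apply_of]
        show u ((FreeGroup.of 1)⁻¹ * (FreeGroup.of 0)⁻¹) = _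
        rw [map_mul, map_inv, map_inv, hu0, hu1]
        have h1 : (QuotientGroup.mk (FreeGroup.of 0 * FreeGroup.of 1 * FreeGroup.of 2) :
            FreeGroup (Fin 3) ⧸ K) = 1 := (QuotientGroup.eq_one_iff _).mpr hXYZ
        rw [QuotientGroup.mk_mul, QuotientGroup.mk_mul] at h1
        have h2 := congrArg (fun t => (QuotientGroup.mk (FreeGroup.of 1) :
            FreeGroup (Fin 3) ⧸ K)⁻¹ * ((QuotientGroup.mk (FreeGroup.of 0) :
            FreeGroup (Fin 3) ⧸ K)⁻¹ * t)) h1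
        rw [← mul_assoc, ← mul_assoc] at h2
        group at h2
        rw [h2]
        group
    have h1 : QuotientGroup.mk' K W = 1 := by
      rw [← hucomp]
      show u (ρ3 W) = 1
      rw [hρW, map_one]
    exact (QuotientGroup.eq_one_iff W).mp h1
  rw [hK, Subgroup.mem_comap] at hWK
  obtain ⟨m, hm⟩ := Subgroup.mem_zpowers_iff.mp hWK
  rw [hW] at hm
  rw [← hm]
  exact Subgroup.zpow_mem _ (Subgroup.subset_closure (Set.mem_insert _ _)) m

/-- If `P ∈ PB_n` is a product of `b_{ij}^{±1}, b_{ik}^{±1}, b_{jk}^{±1}` and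
`\widetilde{w}_{ijk}(\widetilde{φ}(P)) = 1`, then `P` is a product of elements
`(b_{ij}b_{ik}b_{jk})^{±1}` and `(b_{jk}b_{ik}b_{ij})^{±1}`. -/
theorem wtilde_trivial_implies_product (n : ℕ) (i j k : Fin n) (hij : i < j) (hjk : j < k)
    (φt : PBn n →* TGn3 n) (hφt : ∀ p : PBGen n, φt (PresentedGroup.of p) = tphiGen p)
    (π : TGn3 n →* Gn3 (n + 1)) (hπ : ∀ g : TGen n, π (PresentedGroup.of g) = piGen g)
    (w : Gn3 (n + 1) →* Fn3 (n + 1) i.castSucc j.castSucc k.castSucc)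
    (hw : ∀ L : List (TripleIndex (n + 1)),
      w (gn3Word L) = wWord i.castSucc j.castSucc k.castSucc L)
    (P : PBn n)
    (hP : P ∈ Subgroup.closure
      {(PresentedGroup.of ⟨(i, j), hij⟩ : PBn n),
        PresentedGroup.of ⟨(i, k), hij.trans hjk⟩, PresentedGroup.of ⟨(j, k), hjk⟩})
    (hPw : w (π (φt P)) = 1) :
    P ∈ Subgroup.closure
      {(PresentedGroup.of ⟨(i, j), hij⟩ : PBn n) * PresentedGroup.of ⟨(i, k), hij.trans hjk⟩ *
          PresentedGroup.of ⟨(j, k), hjk⟩,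
        (PresentedGroup.of ⟨(j, k), hjk⟩ : PBn n) * PresentedGroup.of ⟨(i, k), hij.trans hjk⟩ *
          PresentedGroup.of ⟨(i, j), hij⟩} := by
  exact wtilde_trivial_implies_product' n i j k hij hjk φt hφt π hπ w hw P hP hPw
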